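/- Suppose there exists a unit g ∈ A with T(g) = τ·g. Then for f ∈ A the following are equivalent: (1) multiplication by f commutes with T, i.e. T(f·x) = f·T(x) for all x ∈ A; (2) f^s = f. -/

import Mathlib

open AddMonoidAlgebra

/-- The Laurent polynomial ring `K[X^{±1}, Y^{±1}]` in two variables,
realized as the monoid algebra of `ℤ × ℤ` over `K`. -/
abbrev LP2 (K : Type*) [Field K] := AddMonoidAlgebra K (ℤ × ℤ)

/-- The variable `X`. -/
noncomputable def Xv (K : Type*) [Field K] : LP2 K := of' K (ℤ × ℤ) (1, 0)

/-- The variable `Y`. -/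
noncomputable def Yv (K : Type*) [Field K] : LP2 K := of' K (ℤ × ℤ) (0, 1)

/-- `X⁻¹`. -/
noncomputable def Xinv (K : Type*) [Field K] : LP2 K := of' K (ℤ × ℤ) (-1, 0)

/-- `Y⁻¹`. -/
noncomputable def Yinv (K : Type*) [Field K] : LP2 K := of' K (ℤ × ℤ) (0, -1)

/-- The `K`-algebra involution of `K[X^{±1}, Y^{±1}]` swapping `X` and `Y`. -/
noncomputable def swapXY (K : Type*) [Field K] : LP2 K ≃ₐ[K] LP2 K :=
  AddMonoidAlgebra.domCongr K K (AddEquiv.prodComm : ℤ × ℤ ≃+ ℤ × ℤ)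

/-- Suppose `𝒯` satisfies the quadratic relation `𝒯² = (τ−1)·𝒯 + τ·id` and the
denominator-cleared Bernstein relation
`(X − Y)·(𝒯(h·x) − h^s·𝒯(x)) = (τ−1)·X·(h − h^s)·x`, and that there is a unit
`g` with `𝒯(g) = τ·g`. Then multiplication by `f` commutes with `𝒯` if and only
if `f^s = f`. -/
theorem statement12 {K : Type*} [Field K] (τ : K)
    (𝒯 : LP2 K →ₗ[K] LP2 K)
    (hquad : ∀ x : LP2 K, 𝒯 (𝒯 x) = (τ - 1) • 𝒯 x + τ • x)
    (hcomm : ∀ h x : LP2 K,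
      (Xv K - Yv K) * (𝒯 (h * x) - swapXY K h * 𝒯 x)
        = (τ - 1) • (Xv K * ((h - swapXY K h) * x)))
    (g : LP2 K) (hg : IsUnit g) (hTg : 𝒯 g = τ • g)
    (f : LP2 K) :
    (∀ x : LP2 K, 𝒯 (f * x) = f * 𝒯 x) ↔ swapXY K f = f := by
  constructor
  · intro hT
    have hg0 : g ≠ 0 := hg.ne_zero
    have hXτY : Xv K - τ • Yv K ≠ 0 := by
      intro h
      have := congrArg (fun p : LP2 K => p.coeff (1,0)) h
      simp only [Xv, Yv, of'_apply, AddMonoidAlgebra.coeff_sub, AddMonoidAlgebra.coeff_smul,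
        AddMonoidAlgebra.coeff_single] at this
      rw [Finsupp.sub_apply, Finsupp.smul_apply, Finsupp.single_apply,
        Finsupp.single_apply] at this
      simp at this
    have h1 := hcomm f g
    rw [hT g, hTg] at h1
    have h2 : (Xv K - τ • Yv K) * ((f - swapXY K f) * g) = 0 := by
      simp only [Algebra.smul_def, map_sub, map_one] at h1 ⊢
      linear_combination h1
    rcases mul_eq_zero.mp h2 with h | h
    · exact absurd h hXτY
    · rcases mul_eq_zero.mp h with h | h
      · rw [sub_eq_zero] at h; exact h.symm
      · exact absurd h hg0
  · intro hs x
    have hXY : Xv K - Yv K ≠ 0 := by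
      intro h
      have := congrArg (fun p : LP2 K => p.coeff (1,0)) h
      simp only [Xv, Yv, of'_apply, AddMonoidAlgebra.coeff_sub, AddMonoidAlgebra.coeff_smul,
        AddMonoidAlgebra.coeff_single] at this
      rw [Finsupp.sub_apply, Finsupp.single_apply, Finsupp.single_apply] at this
      simp at this
    have h1 := hcomm f x
    rw [hs, sub_self, zero_mul, mul_zero, smul_zero] at h1
    rcases mul_eq_zero.mp h1 with h | h
    · exact absurd h hXY
    · rw [sub_eq_zero] at h; exact h
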